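/- Let X be a random variable on ℝ^m with Laplace density p(x) = K·e^{-b‖x‖} (b > 0, K > 0 the normalizing constant), let ε > 0, and let r₁, r₂ ∈ ℝ^m with ‖r₁ − r₂‖ = Δ > 0. If for every Lebesgue-measurable S ⊆ ℝ^m one has P[r₁ + X ∈ S] ≤ e^{ε} · P[r₂ + X ∈ S], then b ≤ ε/Δ. -/

import Mathlib

open MeasureTheory Real

/-- If `X` is Laplacian noise with density `K·e^{-b‖x‖}`, and for two points
`r₁, r₂` at distance `Δ > 0` the `ε`-differential-privacy inequality
`P[r₁ + X ∈ S] ≤ e^ε · P[r₂ + X ∈ S]` holds for every measurable `S`, then `b ≤ ε/Δ`. -/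
theorem laplacian_dp_scale_bound
    {m : ℕ} (ε Δ b K : ℝ) (hε : 0 < ε) (hb : 0 < b) (hK : 0 < K)
    (r₁ r₂ : EuclideanSpace ℝ (Fin m))
    (hdist : ‖r₁ - r₂‖ = Δ) (hΔ : 0 < Δ)
    {Ω : Type*} [MeasurableSpace Ω] (P : Measure Ω) [IsProbabilityMeasure P]
    (X : Ω → EuclideanSpace ℝ (Fin m)) (hX : Measurable X)
    (hlaw : Measure.map X P =
      volume.withDensity (fun x : EuclideanSpace ℝ (Fin m) =>
        ENNReal.ofReal (K * Real.exp (-b * ‖x‖))))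
    (hdp : ∀ S : Set (EuclideanSpace ℝ (Fin m)), MeasurableSet S →
      P {ω | r₁ + X ω ∈ S} ≤ ENNReal.ofReal (Real.exp ε) * P {ω | r₂ + X ω ∈ S}) :
    b ≤ ε / Δ := by
  set v : EuclideanSpace ℝ (Fin m) := r₁ - r₂ with hv
  set fR : EuclideanSpace ℝ (Fin m) → ℝ := fun x => K * Real.exp (-b * ‖x‖) with hfR
  have hfRc : Continuous fR := by
    continuity
  have hfRnn : ∀ x, 0 ≤ fR x := fun x => le_of_lt (by positivity)
  set f : EuclideanSpace ℝ (Fin m) → ENNReal := fun x => ENNReal.ofReal (fR x) with hf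
  have hfm : Measurable f := (ENNReal.continuous_ofReal.comp hfRc).measurable
  -- Step 1: set-lintegral inequality
  have key : ∀ T : Set (EuclideanSpace ℝ (Fin m)), MeasurableSet T →
      (∫⁻ x in T, f x) ≤ ENNReal.ofReal (Real.exp ε) * ∫⁻ x in T, f (x + v) := by
    intro T hT
    have hsubm : Measurable fun x : EuclideanSpace ℝ (Fin m) => x - r₁ := measurable_id.sub measurable_const
    have hsubv : Measurable fun x : EuclideanSpace ℝ (Fin m) => x - v := measurable_id.sub measurable_const
    set S : Set (EuclideanSpace ℝ (Fin m)) := (fun x : EuclideanSpace ℝ (Fin m) => x - r₁) ⁻¹' T with hS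
    have hSm : MeasurableSet S := hT.preimage hsubm
    have h1 : {ω | r₁ + X ω ∈ S} = X ⁻¹' T := by
      ext ω; simp [hS, Set.mem_preimage, add_sub_cancel_left]
    have h2 : {ω | r₂ + X ω ∈ S} = X ⁻¹' ((fun x : EuclideanSpace ℝ (Fin m) => x - v) ⁻¹' T) := by
      ext ω
      have : r₂ + X ω - r₁ = X ω - v := by rw [hv]; abel
      simp [hS, Set.mem_preimage, this]
    have hP1 : P {ω | r₁ + X ω ∈ S} = ∫⁻ x in T, f x := by
      rw [h1, ← Measure.map_apply hX hT, hlaw, withDensity_apply _ hT]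
    have hP2 : P {ω | r₂ + X ω ∈ S} = ∫⁻ x in T, f (x + v) := by
      have hTm' : MeasurableSet ((fun x : EuclideanSpace ℝ (Fin m) => x - v) ⁻¹' T) := hT.preimage hsubv
      rw [h2, ← Measure.map_apply hX hTm', hlaw, withDensity_apply _ hTm']
      calc (∫⁻ x in (fun x : EuclideanSpace ℝ (Fin m) => x - v) ⁻¹' T, f x)
          = ∫⁻ x in (fun x : EuclideanSpace ℝ (Fin m) => x - v) ⁻¹' T, f x ∂(Measure.map (· + v) volume) := by
            rw [map_add_right_eq_self volume v]
        _ = ∫⁻ x in (· + v) ⁻¹' ((fun x : EuclideanSpace ℝ (Fin m) => x - v) ⁻¹' T), f (x + v) := by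
            rw [setLIntegral_map hTm' hfm (measurable_add_const v)]
        _ = ∫⁻ x in T, f (x + v) := by
            have hpre : (· + v) ⁻¹' ((fun x : EuclideanSpace ℝ (Fin m) => x - v) ⁻¹' T) = T := by
              ext x; simp [Set.mem_preimage, add_sub_cancel_right]
            rw [hpre]
    calc (∫⁻ x in T, f x) = P {ω | r₁ + X ω ∈ S} := hP1.symm
      _ ≤ ENNReal.ofReal (Real.exp ε) * P {ω | r₂ + X ω ∈ S} := hdp S hSm
      _ = ENNReal.ofReal (Real.exp ε) * ∫⁻ x in T, f (x + v) := by rw [hP2]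
  -- Step 2: a.e. pointwise inequality
  set g : EuclideanSpace ℝ (Fin m) → ENNReal := fun x => ENNReal.ofReal (Real.exp ε) * f (x + v) with hg
  have hae : f ≤ᵐ[volume] g := by
    refine ae_le_of_forall_setLIntegral_le_of_sigmaFinite hfm fun s hs _ => ?_
    rw [hg]
    have hm' : Measurable fun x : EuclideanSpace ℝ (Fin m) => f (x + v) :=
      hfm.comp (measurable_add_const v)
    rw [lintegral_const_mul _ hm']
    exact key s hs
  -- Step 3: real a.e. inequality
  set gR : EuclideanSpace ℝ (Fin m) → ℝ := fun x => Real.exp ε * fR (x + v) with hgR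
  have hgRc : Continuous gR := by
    have : Continuous fun x : EuclideanSpace ℝ (Fin m) => x + v := continuous_id.add continuous_const
    exact continuous_const.mul (hfRc.comp this)
  have haeR : ∀ᵐ x ∂(volume : Measure (EuclideanSpace ℝ (Fin m))), fR x ≤ gR x := by
    filter_upwards [hae] with x hx
    have hx' : ENNReal.ofReal (fR x) ≤ ENNReal.ofReal (gR x) := by
      rw [hgR]
      simpa [f, ENNReal.ofReal_mul (Real.exp_nonneg ε)] using hx
    exact (ENNReal.ofReal_le_ofReal_iff
      (by positivity)).mp hx'
  -- Step 4: inequality at v by density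
  have hdense : Dense {x : EuclideanSpace ℝ (Fin m) | fR x ≤ gR x} := Measure.dense_of_ae haeR
  have hle : fR v ≤ gR v := by
    by_contra hlt
    push_neg at hlt
    have hopen : IsOpen {x : EuclideanSpace ℝ (Fin m) | gR x < fR x} := isOpen_lt hgRc hfRc
    obtain ⟨x, hx1, hx2⟩ := hdense.inter_open_nonempty _ hopen ⟨v, hlt⟩
    simp only [Set.mem_setOf_eq] at hx1 hx2
    exact absurd hx2 (not_le.mpr hx1)
  -- Step 5: conclude
  have hnv : ‖v‖ = Δ := hdist
  have hnvv : ‖v + v‖ = 2 * Δ := by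
    have : v + v = (2 : ℝ) • v := (two_smul ℝ v).symm
    rw [this, norm_smul, hnv]
    simp
  rw [hfR] at hle
  simp only [hgR, hfR, hnv, hnvv] at hle
  have hle' : Real.exp (-b * Δ) ≤ Real.exp ε * Real.exp (-b * (2 * Δ)) := by
    have := (mul_le_mul_iff_right₀ hK).mp (by linarith [hle] : K * Real.exp (-b * Δ) ≤
      K * (Real.exp ε * Real.exp (-b * (2 * Δ)))); linarith
  rw [← Real.exp_add] at hle'
  have := Real.exp_le_exp.mp hle'
  rw [le_div_iff₀ hΔ]
  nlinarith
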